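/- Let J = diag(I_{p}, −I_{q}) be the (p+q)×(p+q) signature matrix, and let X, Y ∈ ℝ^{m×(p+q)} be matrices of full column rank p+q such that X J Xᵀ = Y J Yᵀ, where moreover X J Xᵀ has exactly p positive and q negative eigenvalues. Then there exists a matrix Q in the indefinite orthogonal group O(p,q) (i.e., Q J Qᵀ = J) such that Y = X Q. -/
import Mathlib


open Matrix Module

private lemma mulVecLin_inj_of_rank {m n : ℕ} (X : Matrix (Fin m) (Fin n) ℝ)
    (hX : X.rank = n) : Function.Injective X.mulVecLin := by
  rw [← LinearMap.ker_eq_bot]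
  have h := LinearMap.finrank_range_add_finrank_ker X.mulVecLin
  rw [Matrix.rank] at hX
  have h2 : finrank ℝ (Fin n → ℝ) = n := by simp
  have : finrank ℝ (LinearMap.ker X.mulVecLin) = 0 := by omega
  exact Submodule.finrank_eq_zero.mp this

private lemma mul_cancel_left_of_inj {m n k : ℕ} (X : Matrix (Fin m) (Fin n) ℝ)
    (hX : Function.Injective X.mulVecLin)
    (M N : Matrix (Fin n) (Fin k) ℝ) (h : X * M = X * N) : M = N := by
  ext i j
  have key := congrFun (hX (a₁ := fun r => M r j) (a₂ := fun r => N r j) ?_) i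
  · exact key
  · ext r
    have := congrFun (congrFun h r) j
    simpa [Matrix.mul_apply, Matrix.mulVecLin_apply, Matrix.mulVec, dotProduct] using this

private lemma range_eq_of_factor {m n : ℕ} (X : Matrix (Fin m) (Fin n) ℝ)
    (H : Matrix (Fin m) (Fin m) ℝ) (C : Matrix (Fin n) (Fin m) ℝ)
    (hfac : H = X * C) (hX : X.rank = n) (hH : H.rank = n) :
    LinearMap.range H.mulVecLin = LinearMap.range X.mulVecLin := by
  have hle : LinearMap.range H.mulVecLin ≤ LinearMap.range X.mulVecLin := by
    rw [hfac, Matrix.mulVecLin_mul]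
    exact LinearMap.range_comp_le_range _ _
  refine Submodule.eq_of_le_of_finrank_le hle ?_
  rw [show finrank ℝ (LinearMap.range X.mulVecLin) = X.rank from rfl,
    show finrank ℝ (LinearMap.range H.mulVecLin) = H.rank from rfl, hX, hH]

/-- Indefinite analogue of the orthogonal alignment: if `X J Xᵀ = Y J Yᵀ` with
`J = diag(I_p, -I_q)`, `X`, `Y` of full column rank `p + q`, and `X J Xᵀ` has
exactly `p` positive and `q` negative eigenvalues, then `Y = X Q` for some `Q`
in the indefinite orthogonal group `O(p, q)`. -/
theorem exists_indefinite_orthogonal_of_eq {p q m : ℕ}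
    (J : Matrix (Fin (p + q)) (Fin (p + q)) ℝ)
    (hJ : J = Matrix.diagonal (fun i : Fin (p + q) => if (i : ℕ) < p then (1 : ℝ) else -1))
    (X Y : Matrix (Fin m) (Fin (p + q)) ℝ)
    (hX : X.rank = p + q) (hY : Y.rank = p + q)
    (heq : X * J * Xᵀ = Y * J * Yᵀ)
    (hH : (X * J * Xᵀ).IsHermitian)
    (hpos : (Finset.univ.filter fun i => 0 < hH.eigenvalues i).card = p)
    (hneg : (Finset.univ.filter fun i => hH.eigenvalues i < 0).card = q) :
    ∃ Q : Matrix (Fin (p + q)) (Fin (p + q)) ℝ,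
      Q * J * Qᵀ = J ∧ Y = X * Q := by
  -- `H` has full rank `p + q` by the eigenvalue count
  have hrankH : (X * J * Xᵀ).rank = p + q := by
    rw [hH.rank_eq_card_non_zero_eigs, Fintype.card_subtype]
    have hsplit : (Finset.univ.filter fun i => hH.eigenvalues i ≠ 0)
        = (Finset.univ.filter fun i => 0 < hH.eigenvalues i)
          ∪ (Finset.univ.filter fun i => hH.eigenvalues i < 0) := by
      rw [← Finset.filter_or]
      exact Finset.filter_congr fun i _ => by constructor <;> rintro h <;> aesop
    rw [hsplit, Finset.card_union_of_disjoint, hpos, hneg]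
    rw [Finset.disjoint_filter]
    intro i _ h1 h2
    exact absurd h1 (asymm h2)
  -- column spaces of `X`, `Y` and `H` coincide
  have hrX : LinearMap.range (X * J * Xᵀ).mulVecLin = LinearMap.range X.mulVecLin :=
    range_eq_of_factor X _ (J * Xᵀ) (by rw [Matrix.mul_assoc]) hX hrankH
  have hrY : LinearMap.range (X * J * Xᵀ).mulVecLin = LinearMap.range Y.mulVecLin :=
    range_eq_of_factor Y _ (J * Yᵀ) (by rw [heq, Matrix.mul_assoc]) hY hrankH
  -- each column of `Y` lies in the column space of `X`
  have hcol : ∀ j, ∃ v : Fin (p + q) → ℝ, X *ᵥ v = fun i => Y i j := by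
    intro j
    have hmem : (fun i => Y i j) ∈ LinearMap.range Y.mulVecLin :=
      ⟨Pi.single j 1, by
        ext i
        simp [Matrix.mulVecLin_apply, Matrix.mulVec, dotProduct, Pi.single_apply]⟩
    rw [← hrY, hrX] at hmem
    exact hmem
  choose c hc using hcol
  refine ⟨Matrix.of fun i j => c j i, ?_, ?_⟩
  · -- `Q J Qᵀ = J`, by left/right cancellation against `X` and `Xᵀ`
    set Q : Matrix (Fin (p + q)) (Fin (p + q)) ℝ := Matrix.of fun i j => c j i with hQ
    have hXQ : Y = X * Q := by
      ext i j
      have := congrFun (hc j) i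
      simpa [Matrix.mul_apply, Matrix.mulVec, dotProduct, hQ] using this.symm
    have hinj : Function.Injective X.mulVecLin := mulVecLin_inj_of_rank X hX
    have key : X * (Q * J * Qᵀ) * Xᵀ = X * J * Xᵀ := by
      calc X * (Q * J * Qᵀ) * Xᵀ = (X * Q) * J * (X * Q)ᵀ := by
            rw [Matrix.transpose_mul]
            simp only [Matrix.mul_assoc]
        _ = X * J * Xᵀ := by rw [← hXQ, heq]
    -- cancel `X` on the left
    have step1 : (Q * J * Qᵀ) * Xᵀ = J * Xᵀ := by
      apply mul_cancel_left_of_inj X hinj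
      calc X * (Q * J * Qᵀ * Xᵀ) = X * (Q * J * Qᵀ) * Xᵀ := by
            simp only [Matrix.mul_assoc]
        _ = X * J * Xᵀ := key
        _ = X * (J * Xᵀ) := by rw [Matrix.mul_assoc]
    -- cancel `Xᵀ` on the right via transposes
    have step2 : X * (Q * J * Qᵀ)ᵀ = X * Jᵀ := by
      have := congrArg Matrix.transpose step1
      simpa [Matrix.transpose_mul] using this
    have := mul_cancel_left_of_inj X hinj _ _ step2
    calc Q * J * Qᵀ = ((Q * J * Qᵀ)ᵀ)ᵀ := by rw [Matrix.transpose_transpose]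
      _ = (Jᵀ)ᵀ := by rw [this]
      _ = J := Matrix.transpose_transpose J
  · ext i j
    have := congrFun (hc j) i
    simpa [Matrix.mul_apply, Matrix.mulVec, dotProduct] using this.symm
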